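/- If G is a bipartite graph with n ≥ 2 vertices and m ≥ 1 edges that attains the minimum degree-based entropy among all bipartite graphs with n vertices and m edges, then G is a difference graph. -/

import Mathlib

open Finset

/-- Degree-based entropy: `I_d(G) = log₂(2m) - (1/(2m)) ∑_v d(v) log₂ d(v)`. -/
noncomputable def degEntropy {V : Type} [Fintype V] (G : SimpleGraph V) : ℝ :=
  Real.logb 2 (2 * (G.edgeSet.ncard : ℝ)) -
    (1 / (2 * (G.edgeSet.ncard : ℝ))) *
      ∑ v : V, ((G.neighborSet v).ncard : ℝ) * Real.logb 2 ((G.neighborSet v).ncard)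

/-- A bipartite graph (with bipartition given by `side`) is a difference graph:
no `x₁ x₂` on one side and `y₁ y₂` on the other with `x₁y₁, x₂y₂ ∈ E`
and `x₁y₂, x₂y₁ ∉ E`. -/
def IsDifferenceGraph {V : Type} (G : SimpleGraph V) (side : V → Bool) : Prop :=
  ¬ ∃ x₁ x₂ y₁ y₂ : V, side x₁ = true ∧ side x₂ = true ∧ side y₁ = false ∧ side y₂ = false ∧
      G.Adj x₁ y₁ ∧ G.Adj x₂ y₂ ∧ ¬ G.Adj x₁ y₂ ∧ ¬ G.Adj x₂ y₁

lemma convex_aux {p x y q : ℝ} (hp : 0 ≤ p) (hpx : p < x) (hxq : x < q)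
    (hpy : p < y) (hyq : y < q) (hsum : x + y = p + q) :
    x * Real.log x + y * Real.log y < p * Real.log p + q * Real.log q := by
  have hpq : p < q := lt_trans hpx hxq
  have hD : 0 < q - p := by linarith
  set t : ℝ := (q - x) / (q - p) with ht
  set s : ℝ := (q - y) / (q - p) with hs
  have ht0 : 0 < t := div_pos (by linarith) hD
  have ht1 : t < 1 := by rw [ht, div_lt_one hD]; linarith
  have hs0 : 0 < s := div_pos (by linarith) hD
  have hs1 : s < 1 := by rw [hs, div_lt_one hD]; linarith
  have ht1' : (0:ℝ) < 1 - t := by linarith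
  have hs1' : (0:ℝ) < 1 - s := by linarith
  have hx' : t * p + (1 - t) * q = x := by
    rw [ht, div_mul_eq_mul_div, one_sub_div hD.ne', div_mul_eq_mul_div, ← add_div,
      div_eq_iff hD.ne']; ring
  have hy' : s * p + (1 - s) * q = y := by
    rw [hs, div_mul_eq_mul_div, one_sub_div hD.ne', div_mul_eq_mul_div, ← add_div,
      div_eq_iff hD.ne']; ring
  have hts : t + s = 1 := by rw [ht, hs]; field_simp; linarith
  have hmem₁ : p ∈ Set.Ici (0:ℝ) := hp
  have hmem₂ : q ∈ Set.Ici (0:ℝ) := le_of_lt (lt_of_le_of_lt hp hpq)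
  have h1 := Real.strictConvexOn_mul_log.2 hmem₁ hmem₂ (ne_of_lt hpq) ht0 ht1' (by ring)
  have h2 := Real.strictConvexOn_mul_log.2 hmem₁ hmem₂ (ne_of_lt hpq) hs0 hs1' (by ring)
  simp only [smul_eq_mul] at h1 h2
  rw [hx'] at h1
  rw [hy'] at h2
  have h3 := add_lt_add h1 h2
  have h4 : t * (p * Real.log p) + (1 - t) * (q * Real.log q) +
      (s * (p * Real.log p) + (1 - s) * (q * Real.log q)) =
      p * Real.log p + q * Real.log q := by
    linear_combination (p * Real.log p - q * Real.log q) * hts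
  linarith [h3, h4]

lemma convex_nat (a b : ℕ) (hb : 1 ≤ b) (hba : b ≤ a) :
    (a:ℝ) * Real.log a + (b:ℝ) * Real.log b <
      ((b:ℝ)-1) * Real.log ((b:ℝ)-1) + ((a:ℝ)+1) * Real.log ((a:ℝ)+1) := by
  have hb' : (1:ℝ) ≤ b := by exact_mod_cast hb
  have hba' : (b:ℝ) ≤ a := by exact_mod_cast hba
  exact convex_aux (by linarith) (by linarith) (by linarith) (by linarith) (by linarith) (by ring)

lemma swap_entropy {n m : ℕ} (hm : 1 ≤ m) (G : SimpleGraph (Fin n)) (side : Fin n → Bool)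
    (hbip : ∀ u v : Fin n, G.Adj u v → side u ≠ side v) (hGm : G.edgeSet.ncard = m)
    (p q r : Fin n) (hadj : G.Adj q r) (hnadj : ¬ G.Adj p r) (hpq : p ≠ q)
    (hside : side p = side q)
    (hdeg : (G.neighborSet q).ncard ≤ (G.neighborSet p).ncard) :
    ∃ H : SimpleGraph (Fin n), (∀ u v : Fin n, H.Adj u v → side u ≠ side v) ∧
      H.edgeSet.ncard = m ∧ degEntropy H < degEntropy G := by
  classical
  have hqr : q ≠ r := hadj.ne
  have hpr : p ≠ r := by
    intro h; subst h; exact hbip q p hadj hside.symm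
  set H : SimpleGraph (Fin n) :=
    SimpleGraph.fromEdgeSet (insert s(p, r) (G.edgeSet \ {s(q, r)})) with hH
  -- adjacency characterization
  have hHadj : ∀ u v : Fin n, H.Adj u v ↔
      (s(u, v) = s(p, r) ∨ (G.Adj u v ∧ s(u, v) ≠ s(q, r))) := by
    intro u v
    rw [hH, SimpleGraph.fromEdgeSet_adj]
    simp only [Set.mem_insert_iff, Set.mem_diff, Set.mem_singleton_iff,
      SimpleGraph.mem_edgeSet]
    constructor
    · rintro ⟨h, -⟩; exact h
    · rintro (h | ⟨h1, h2⟩)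
      · refine ⟨Or.inl h, ?_⟩
        rcases Sym2.eq_iff.1 h with ⟨h1, h2⟩ | ⟨h1, h2⟩
        · rw [h1, h2]; exact hpr
        · rw [h1, h2]; exact hpr.symm
      · exact ⟨Or.inr ⟨h1, h2⟩, h1.ne⟩
  -- bipartite
  refine ⟨H, ?_, ?_, ?_⟩
  · intro u v huv
    rcases (hHadj u v).1 huv with h | ⟨h1, -⟩
    · rcases Sym2.eq_iff.1 h with ⟨h1, h2⟩ | ⟨h1, h2⟩
      · rw [h1, h2, hside]; exact hbip q r hadj
      · rw [h1, h2]
        exact fun hc => hbip q r hadj (hside.symm.trans hc.symm)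
    · exact hbip u v h1
  -- edge count
  · have hne : s(p, r) ≠ s(q, r) := by
      intro h
      rcases Sym2.eq_iff.1 h with ⟨h1, -⟩ | ⟨h1, h2⟩
      · exact hpq h1
      · exact hpr h1
    have hmem : s(q, r) ∈ G.edgeSet := hadj
    have hnmem : s(p, r) ∉ G.edgeSet := hnadj
    have hE : H.edgeSet = insert s(p, r) (G.edgeSet \ {s(q, r)}) := by
      rw [hH, SimpleGraph.edgeSet_fromEdgeSet]
      rw [sdiff_eq_left]
      rw [Set.disjoint_left]
      rintro e (he | ⟨he, -⟩) hd
      · subst he; exact hpr (Sym2.isDiag_iff_proj_eq.1 hd)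
      · exact G.not_isDiag_of_mem_edgeSet he hd
    rw [hE, Set.ncard_def, Set.encard_exchange hnmem hmem, ← Set.ncard_def, hGm]
  -- entropy decreases
  · classical
    have hEc : H.edgeSet.ncard = m := by
      have hmem : s(q, r) ∈ G.edgeSet := hadj
      have hnmem : s(p, r) ∉ G.edgeSet := hnadj
      have hE : H.edgeSet = insert s(p, r) (G.edgeSet \ {s(q, r)}) := by
        rw [hH, SimpleGraph.edgeSet_fromEdgeSet]
        rw [sdiff_eq_left]
        rw [Set.disjoint_left]
        rintro e (he | ⟨he, -⟩) hd
        · subst he; exact hpr (Sym2.isDiag_iff_proj_eq.1 hd)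
        · exact G.not_isDiag_of_mem_edgeSet he hd
      rw [hE, Set.ncard_def, Set.encard_exchange hnmem hmem, ← Set.ncard_def, hGm]
    -- neighbor sets
    have hNp : H.neighborSet p = insert r (G.neighborSet p) := by
      ext w
      simp only [SimpleGraph.mem_neighborSet, hHadj, Set.mem_insert_iff]
      constructor
      · rintro (h | ⟨h1, -⟩)
        · exact Or.inl (Sym2.congr_right.1 h)
        · exact Or.inr h1
      · rintro (rfl | h)
        · exact Or.inl rfl
        · refine Or.inr ⟨h, fun hc => ?_⟩
          rcases Sym2.eq_iff.1 hc with ⟨h1, -⟩ | ⟨h1, -⟩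
          · exact hpq h1
          · exact hpr h1
    have hNq : H.neighborSet q = G.neighborSet q \ {r} := by
      ext w
      simp only [SimpleGraph.mem_neighborSet, hHadj, Set.mem_diff, Set.mem_singleton_iff]
      constructor
      · rintro (h | ⟨h1, h2⟩)
        · rcases Sym2.eq_iff.1 h with ⟨h3, -⟩ | ⟨h3, -⟩
          · exact absurd h3 hpq.symm
          · exact absurd h3 hqr
        · exact ⟨h1, fun hc => h2 (hc ▸ rfl)⟩
      · rintro ⟨h1, h2⟩
        exact Or.inr ⟨h1, fun hc => h2 (Sym2.congr_right.1 hc)⟩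
    have hNr : H.neighborSet r = insert p (G.neighborSet r \ {q}) := by
      ext w
      simp only [SimpleGraph.mem_neighborSet, hHadj, Set.mem_insert_iff, Set.mem_diff,
        Set.mem_singleton_iff]
      constructor
      · rintro (h | ⟨h1, h2⟩)
        · rcases Sym2.eq_iff.1 h with ⟨h3, -⟩ | ⟨-, h4⟩
          · exact absurd h3 hpr.symm
          · exact Or.inl h4
        · refine Or.inr ⟨h1, fun hc => ?_⟩
          exact h2 (by rw [hc]; exact Sym2.eq_swap)
      · rintro (rfl | ⟨h1, h2⟩)
        · exact Or.inl Sym2.eq_swap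
        · refine Or.inr ⟨h1, fun hc => ?_⟩
          rcases Sym2.eq_iff.1 hc with ⟨h3, -⟩ | ⟨-, h4⟩
          · exact hqr h3.symm
          · exact h2 h4
    have hNo : ∀ v : Fin n, v ≠ p → v ≠ q → v ≠ r → H.neighborSet v = G.neighborSet v := by
      intro v hvp hvq hvr
      ext w
      simp only [SimpleGraph.mem_neighborSet, hHadj]
      constructor
      · rintro (h | ⟨h1, -⟩)
        · rcases Sym2.eq_iff.1 h with ⟨h3, -⟩ | ⟨h3, -⟩
          · exact absurd h3 hvp
          · exact absurd h3 hvr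
        · exact h1
      · intro h
        refine Or.inr ⟨h, fun hc => ?_⟩
        rcases Sym2.eq_iff.1 hc with ⟨h3, -⟩ | ⟨h3, -⟩
        · exact hvq h3
        · exact hvr h3
    set A := (G.neighborSet p).ncard with hA
    set B := (G.neighborSet q).ncard with hB
    have hBpos : 1 ≤ B := by
      have : (G.neighborSet q).Nonempty := ⟨r, hadj⟩
      exact (Set.ncard_pos (Set.toFinite _)).2 this
    have hA1 : (H.neighborSet p).ncard = A + 1 := by
      rw [hNp]
      exact Set.ncard_insert_of_notMem (fun h => hnadj h) (Set.toFinite _)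
    have hB1 : (H.neighborSet q).ncard = B - 1 := by
      rw [hNq]
      exact Set.ncard_diff_singleton_of_mem hadj
    have hRcard : (H.neighborSet r).ncard = (G.neighborSet r).ncard := by
      have ha : p ∉ G.neighborSet r \ {q} := fun h => hnadj ((SimpleGraph.mem_neighborSet _ _ _).1 h.1).symm
      have ha' : p ∉ G.neighborSet r := fun h => hnadj ((SimpleGraph.mem_neighborSet _ _ _).1 h).symm
      have hb : q ∈ G.neighborSet r := hadj.symm
      rw [hNr, Set.ncard_def, Set.encard_exchange ha' hb, ← Set.ncard_def]
    -- the sums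
    set F : SimpleGraph (Fin n) → Fin n → ℝ :=
      fun K v => ((K.neighborSet v).ncard : ℝ) * Real.logb 2 ((K.neighborSet v).ncard) with hF
    have hsum : ∑ v : Fin n, F G v < ∑ v : Fin n, F H v := by
      have hsub : ({p, q} : Finset (Fin n)) ⊆ univ := subset_univ _
      have hsplitG := Finset.sum_sdiff (f := F G) hsub
      have hsplitH := Finset.sum_sdiff (f := F H) hsub
      have heq : ∑ v ∈ univ \ {p, q}, F H v = ∑ v ∈ univ \ {p, q}, F G v := by
        refine Finset.sum_congr rfl fun v hv => ?_
        simp only [Finset.mem_sdiff, Finset.mem_insert, Finset.mem_singleton, not_or] at hv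
        obtain ⟨-, hvp, hvq⟩ := hv
        by_cases hvr : v = r
        · subst hvr; rw [hF]; simp only; rw [hRcard]
        · rw [hF]; simp only; rw [hNo v hvp hvq hvr]
      have hpairG : ∑ v ∈ ({p, q} : Finset (Fin n)), F G v = F G p + F G q :=
        Finset.sum_pair hpq
      have hpairH : ∑ v ∈ ({p, q} : Finset (Fin n)), F H v = F H p + F H q :=
        Finset.sum_pair hpq
      have hkey : F G p + F G q < F H p + F H q := by
        have hcast : ((B - 1 : ℕ) : ℝ) = (B : ℝ) - 1 := by
          simpa using (Nat.cast_sub hBpos : ((B - 1 : ℕ) : ℝ) = _)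
        have hconv := convex_nat A B hBpos hdeg
        have hlog2 : (0 : ℝ) < Real.log 2 := Real.log_pos one_lt_two
        have hdiv := div_lt_div_of_pos_right hconv hlog2
        rw [hF]
        simp only
        rw [hA1, hB1, hcast]
        push_cast
        simp only [Real.logb, ← hA, ← hB]
        calc (A : ℝ) * (Real.log A / Real.log 2) + (B : ℝ) * (Real.log B / Real.log 2)
            = ((A : ℝ) * Real.log A + (B : ℝ) * Real.log B) / Real.log 2 := by ring
          _ < (((B : ℝ) - 1) * Real.log ((B : ℝ) - 1)
                + ((A : ℝ) + 1) * Real.log ((A : ℝ) + 1)) / Real.log 2 := hdiv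
          _ = ((A : ℝ) + 1) * (Real.log ((A : ℝ) + 1) / Real.log 2)
                + ((B : ℝ) - 1) * (Real.log ((B : ℝ) - 1) / Real.log 2) := by ring
      linarith [hsplitG, hsplitH, heq, hpairG, hpairH, hkey]
    -- conclude
    unfold degEntropy
    rw [hEc, hGm]
    have hmpos : (0 : ℝ) < 2 * (m : ℝ) := by
      have : (1 : ℝ) ≤ (m : ℝ) := by exact_mod_cast hm
      linarith
    have hcoef : (0 : ℝ) < 1 / (2 * (m : ℝ)) := by positivity
    have := mul_lt_mul_of_pos_left hsum hcoef
    simp only [hF] at this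
    linarith [this]
/-- a minimizer of the degree-based entropy among `(n,m)`-bipartite graphs
is a difference graph. -/
theorem minimizer_isDifference {n m : ℕ} (hn : 2 ≤ n) (hm : 1 ≤ m)
    (G : SimpleGraph (Fin n)) (side : Fin n → Bool)
    (hbip : ∀ u v : Fin n, G.Adj u v → side u ≠ side v)
    (hGm : G.edgeSet.ncard = m)
    (hmin : ∀ (H : SimpleGraph (Fin n)) (sideH : Fin n → Bool),
      (∀ u v : Fin n, H.Adj u v → sideH u ≠ sideH v) → H.edgeSet.ncard = m →
        degEntropy G ≤ degEntropy H) :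
    IsDifferenceGraph G side := by
  rintro ⟨x₁, x₂, y₁, y₂, hs1, hs2, hs3, hs4, ha1, ha2, hna1, hna2⟩
  have hne : x₁ ≠ x₂ := fun h => hna1 (h ▸ ha2)
  by_cases hd : (G.neighborSet x₂).ncard ≤ (G.neighborSet x₁).ncard
  · obtain ⟨H, hb, hc, hlt⟩ :=
      swap_entropy hm G side hbip hGm x₁ x₂ y₂ ha2 hna1 hne (hs1.trans hs2.symm) hd
    exact absurd (hmin H side hb hc) (not_le.2 hlt)
  · push_neg at hd
    obtain ⟨H, hb, hc, hlt⟩ :=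
      swap_entropy hm G side hbip hGm x₂ x₁ y₁ ha1 hna2 hne.symm (hs2.trans hs1.symm) hd.le
    exact absurd (hmin H side hb hc) (not_le.2 hlt)
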